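/- arXiv:2202.12329 — 2 statements merged into one kernel-verified Lean document; each statement's English description precedes it below -/
import Mathlib

section
/- Let B_β = ((−1)^{‖β‖_1}/β!) ∑_{α≥0} (−1)^{‖α‖_1} A_α H_{α+β}((s_B − t₀)/√δ) where A_α = (1/α!) ∑_{j∈B} q_j ((s_j−s_B)/√δ)^α. Then B_β = ((−1)^{‖β‖_1}/β!) ∑_{j∈B} q_j H_β((s_j − t₀)/√δ), assuming all series converge absolutely. -/
set_option maxHeartbeats 1000000

open Finset Polynomial

/-- The one-dimensional Hermite function `h_n(t) = (-1)^n (d^n/dt^n) e^{-t^2}`. -/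
noncomputable def hermiteFun (n : ℕ) (t : ℝ) : ℝ :=
  (-1 : ℝ) ^ n * iteratedDeriv n (fun x => Real.exp (-x ^ 2)) t

/-- The multi-dimensional Hermite function `H_α(t) = ∏_i h_{α_i}(t_i)`. -/
noncomputable def hermiteFunMulti {d : ℕ} (α : Fin d → ℕ) (t : Fin d → ℝ) : ℝ :=
  ∏ i, hermiteFun (α i) (t i)

noncomputable def HPoly : ℕ → Polynomial ℤ
  | 0 => 1
  | n + 1 => 2 * Polynomial.X * HPoly n - Polynomial.derivative (HPoly n)

lemma iteratedDeriv_gauss_real (n : ℕ) (x : ℝ) :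
    iteratedDeriv n (fun x : ℝ => Real.exp (-x ^ 2)) x
      = (-1 : ℝ) ^ n * Polynomial.aeval x (HPoly n) * Real.exp (-x ^ 2) := by
  induction n generalizing x with
  | zero => simp [HPoly]
  | succ n ih =>
    rw [iteratedDeriv_succ]
    have hrw : iteratedDeriv n (fun x : ℝ => Real.exp (-x ^ 2))
        = fun y => (-1 : ℝ) ^ n * Polynomial.aeval y (HPoly n) * Real.exp (-y ^ 2) :=
      funext fun y => ih y
    rw [hrw]
    have h1 : HasDerivAt (fun y : ℝ => (-1 : ℝ) ^ n * Polynomial.aeval y (HPoly n))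
        ((-1 : ℝ) ^ n * Polynomial.aeval x (Polynomial.derivative (HPoly n))) x :=
      ((HPoly n).hasDerivAt_aeval x).const_mul _
    have h2 : HasDerivAt (fun y : ℝ => Real.exp (-y ^ 2))
        (Real.exp (-x ^ 2) * -(2 * x)) x := by
      have h0 : HasDerivAt (fun y : ℝ => -y ^ 2) (-(2 * x)) x := by
        simpa using (hasDerivAt_pow 2 x).fun_neg
      simpa using h0.exp
    rw [(h1.fun_mul h2).deriv]
    simp only [HPoly, map_sub, map_mul, map_ofNat, aeval_X, pow_succ]
    ring

lemma iteratedDeriv_gauss_complex (n : ℕ) (x : ℂ) :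
    iteratedDeriv n (fun x : ℂ => Complex.exp (-x ^ 2)) x
      = (-1 : ℂ) ^ n * Polynomial.aeval x (HPoly n) * Complex.exp (-x ^ 2) := by
  induction n generalizing x with
  | zero => simp [HPoly]
  | succ n ih =>
    rw [iteratedDeriv_succ]
    have hrw : iteratedDeriv n (fun x : ℂ => Complex.exp (-x ^ 2))
        = fun y => (-1 : ℂ) ^ n * Polynomial.aeval y (HPoly n) * Complex.exp (-y ^ 2) :=
      funext fun y => ih y
    rw [hrw]
    have h1 : HasDerivAt (fun y : ℂ => (-1 : ℂ) ^ n * Polynomial.aeval y (HPoly n))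
        ((-1 : ℂ) ^ n * Polynomial.aeval x (Polynomial.derivative (HPoly n))) x :=
      ((HPoly n).hasDerivAt_aeval x).const_mul _
    have h2 : HasDerivAt (fun y : ℂ => Complex.exp (-y ^ 2))
        (Complex.exp (-x ^ 2) * -(2 * x)) x := by
      have h0 : HasDerivAt (fun y : ℂ => -y ^ 2) (-(2 * x)) x := by
        simpa using (hasDerivAt_pow 2 x).fun_neg
      simpa using h0.cexp
    rw [(h1.fun_mul h2).deriv]
    simp only [HPoly, map_sub, map_mul, map_ofNat, aeval_X, pow_succ]
    ring

lemma hermiteFun_eq (n : ℕ) (t : ℝ) :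
    hermiteFun n t = Polynomial.aeval t (HPoly n) * Real.exp (-t ^ 2) := by
  rw [hermiteFun, iteratedDeriv_gauss_real, ← mul_assoc, ← mul_assoc, ← pow_add,
    Even.neg_one_pow ⟨n, rfl⟩, one_mul]

lemma itd_comp (f : ℂ → ℂ) (k m : ℕ) :
    iteratedDeriv k (iteratedDeriv m f) = iteratedDeriv (k + m) f := by
  induction k with
  | zero => simp
  | succ k ih =>
    rw [iteratedDeriv_succ, ih, ← iteratedDeriv_succ,
      show k + m + 1 = k + 1 + m by omega]

lemma itd_const_mul (c : ℂ) (f : ℂ → ℂ) (n : ℕ) :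
    iteratedDeriv n (fun z => c * f z) = fun z => c * iteratedDeriv n f z := by
  induction n with
  | zero => simp
  | succ n ih =>
    rw [iteratedDeriv_succ, ih, iteratedDeriv_succ]
    exact deriv_const_mul_field' c

lemma hermite_hasSum (β : ℕ) (u v : ℝ) :
    HasSum (fun k : ℕ => (-1 : ℝ) ^ k * v ^ k / (Nat.factorial k) * hermiteFun (k + β) u)
      (hermiteFun β (u + v)) := by
  set F : ℂ → ℂ := fun z => Complex.exp (-z ^ 2) with hF
  have hFe : ∀ (k : ℕ) (z : ℂ), iteratedDeriv k F z
      = (-1 : ℂ) ^ k * Polynomial.aeval z (HPoly k) * Complex.exp (-z ^ 2) :=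
    fun k z => iteratedDeriv_gauss_complex k z
  set G : ℂ → ℂ := fun z => (-1 : ℂ) ^ β * iteratedDeriv β F z with hG
  have hGe : G = fun z => Polynomial.aeval z (HPoly β) * Complex.exp (-z ^ 2) := by
    funext z
    rw [hG]
    simp only [hFe β z]
    rw [← mul_assoc, ← mul_assoc, ← pow_add, Even.neg_one_pow ⟨β, rfl⟩, one_mul]
  have hGd : Differentiable ℂ G := by
    rw [hGe]
    exact (HPoly β).differentiable_aeval.mul (((differentiable_pow 2).neg).cexp)
  have H := Complex.hasSum_taylorSeries_of_entire hGd (u : ℂ) ((u + v : ℝ) : ℂ)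
  have hsq : ∀ k : ℕ, ((-1 : ℂ)) ^ β * ((-1 : ℂ)) ^ (k + β) = (-1 : ℂ) ^ k := by
    intro k
    rw [pow_add, mul_comm ((-1 : ℂ) ^ k), ← mul_assoc, ← pow_add,
      Even.neg_one_pow ⟨β, rfl⟩, one_mul]
  have haev : ∀ (x : ℝ) (p : Polynomial ℤ), ((Polynomial.aeval x p : ℝ) : ℂ)
      = Polynomial.aeval (x : ℂ) p := by
    intro x p
    rw [show ((x : ℂ)) = algebraMap ℝ ℂ x from rfl, Polynomial.aeval_algebraMap_apply]
    rfl
  have hterm : (fun k : ℕ =>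
      ((((-1 : ℝ) ^ k * v ^ k / (Nat.factorial k) * hermiteFun (k + β) u : ℝ)) : ℂ))
      = fun k : ℕ => ((Nat.factorial k : ℂ))⁻¹ • (((u + v : ℝ) : ℂ) - (u : ℂ)) ^ k •
          iteratedDeriv k G (u : ℂ) := by
    funext k
    have h1 : iteratedDeriv k G (u : ℂ)
        = (((-1 : ℝ) ^ k * Polynomial.aeval u (HPoly (k + β)) * Real.exp (-u ^ 2) : ℝ) : ℂ) := by
      rw [hG]
      rw [itd_const_mul ((-1 : ℂ) ^ β) (iteratedDeriv β F) k]
      rw [show iteratedDeriv k (iteratedDeriv β F) = iteratedDeriv (k + β) F from itd_comp F k β]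
      beta_reduce
      rw [hFe (k + β), ← mul_assoc, ← mul_assoc, hsq k]
      rw [Complex.ofReal_mul, Complex.ofReal_mul, haev, Complex.ofReal_exp]
      push_cast
      ring
    rw [h1, hermiteFun_eq, smul_eq_mul, smul_eq_mul]
    push_cast
    ring
  have hval : ((hermiteFun β (u + v) : ℝ) : ℂ) = G ((u + v : ℝ) : ℂ) := by
    simp only [hGe]
    rw [hermiteFun_eq, Complex.ofReal_mul, haev, Complex.ofReal_exp]
    push_cast
    ring
  refine Complex.hasSum_ofReal.mp ?_
  rw [hterm, hval]
  exact H

lemma hermite_summable_abs (β : ℕ) (u v : ℝ) :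
    Summable fun k : ℕ => |(-1 : ℝ) ^ k * v ^ k / (Nat.factorial k) * hermiteFun (k + β) u| := by
  set w : ℝ := 2 * |v| + 1 with hwdef
  have hw0 : 0 < w := by positivity
  have ht : Filter.Tendsto
      (fun k : ℕ => |(-1 : ℝ) ^ k * w ^ k / (Nat.factorial k) * hermiteFun (k + β) u|)
      Filter.atTop (nhds 0) := by
    have := (hermite_hasSum β u w).summable.tendsto_atTop_zero.abs
    simpa using this
  obtain ⟨M, hM⟩ := ht.bddAbove_range
  have hMk : ∀ k : ℕ, |(-1 : ℝ) ^ k * w ^ k / (Nat.factorial k) * hermiteFun (k + β) u| ≤ M :=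
    fun k => hM (Set.mem_range_self k)
  have hM0 : 0 ≤ M := le_trans (abs_nonneg _) (hMk 0)
  refine Summable.of_nonneg_of_le (fun k => abs_nonneg _) (fun k => ?_)
    (((summable_geometric_of_lt_one (by norm_num) (by norm_num : (1/2 : ℝ) < 1)).mul_left M))
  have hhalf : |v| / w ≤ 1 / 2 := by
    rw [div_le_div_iff₀ hw0 (by norm_num)]
    simp only [hwdef]
    nlinarith [abs_nonneg v]
  have heq : |(-1 : ℝ) ^ k * v ^ k / (Nat.factorial k) * hermiteFun (k + β) u|
      = (|v| / w) ^ k * |(-1 : ℝ) ^ k * w ^ k / (Nat.factorial k) * hermiteFun (k + β) u| := by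
    simp only [abs_mul, abs_div, abs_pow, abs_neg, abs_one, one_pow, one_mul,
      Nat.abs_cast, div_pow, abs_of_pos hw0]
    field_simp
  rw [heq]
  calc (|v| / w) ^ k * |(-1 : ℝ) ^ k * w ^ k / (Nat.factorial k) * hermiteFun (k + β) u|
      ≤ (1 / 2) ^ k * M := by
        apply mul_le_mul (pow_le_pow_left₀ (by positivity) hhalf k) (hMk k) (abs_nonneg _)
        positivity
    _ = M * (1 / 2) ^ k := by ring

lemma pi_hasSum {d : ℕ} (g : Fin d → ℕ → ℝ) (S : Fin d → ℝ)
    (hg : ∀ i, HasSum (g i) (S i)) (ha : ∀ i, Summable fun n => |g i n|) :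
    HasSum (fun α : Fin d → ℕ => ∏ i, g i (α i)) (∏ i, S i) ∧
      Summable fun α : Fin d → ℕ => |∏ i, g i (α i)| := by
  induction d with
  | zero =>
    constructor
    · simpa using hasSum_unique (fun α : Fin 0 → ℕ => ∏ i, g i (α i))
    · exact (hasSum_unique _).summable
  | succ d ih =>
    obtain ⟨ih1', ih2'⟩ := ih (fun i => g i.succ) (fun i => S i.succ)
      (fun i => hg i.succ) (fun i => ha i.succ)
    have ih1 : HasSum (fun α : Fin d → ℕ => ∏ i : Fin d, g i.succ (α i))
        (∏ i : Fin d, S i.succ) := ih1'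
    have ih2 : Summable (fun α : Fin d → ℕ => |∏ i : Fin d, g i.succ (α i)|) := ih2'
    clear ih1' ih2'
    have habs : Summable (fun p : ℕ × (Fin d → ℕ) =>
        |g 0 p.1 * ∏ i : Fin d, g i.succ (p.2 i)|) := by
      have := (ha 0).mul_of_nonneg ih2 (fun _ => abs_nonneg _) (fun _ => abs_nonneg _)
      simpa [abs_mul] using this
    have hs : Summable (fun p : ℕ × (Fin d → ℕ) => g 0 p.1 * ∏ i : Fin d, g i.succ (p.2 i)) :=
      summable_abs_iff.mp habs
    have hprod : HasSum (fun p : ℕ × (Fin d → ℕ) => g 0 p.1 * ∏ i : Fin d, g i.succ (p.2 i))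
        (S 0 * ∏ i : Fin d, S i.succ) :=
      HasSum.mul (f := g 0) (g := fun α : Fin d → ℕ => ∏ i : Fin d, g i.succ (α i))
        (hg 0) ih1 hs
    set e : (Fin (d+1) → ℕ) ≃ ℕ × (Fin d → ℕ) := (Fin.consEquiv fun _ => ℕ).symm with he
    have hcomp : ∀ α : Fin (d+1) → ℕ,
        g 0 (α 0) * ∏ i : Fin d, g i.succ (α i.succ) = ∏ i, g i (α i) :=
      fun α => (Fin.prod_univ_succ (fun i : Fin (d+1) => g i (α i))).symm
    constructor
    · have h2 := e.hasSum_iff.mpr hprod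
      have h3 : ((fun p : ℕ × (Fin d → ℕ) => g 0 p.1 * ∏ i : Fin d, g i.succ (p.2 i)) ∘ e)
          = fun α : Fin (d+1) → ℕ => ∏ i, g i (α i) := by
        funext α
        exact hcomp α
      rw [h3] at h2
      rw [Fin.prod_univ_succ]
      exact h2
    · have h2 := e.summable_iff.mpr habs
      have h3 : ((fun p : ℕ × (Fin d → ℕ) => |g 0 p.1 * ∏ i : Fin d, g i.succ (p.2 i)|) ∘ e)
          = fun α : Fin (d+1) → ℕ => |∏ i, g i (α i)| := by
        funext α
        simp only [Function.comp_apply]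
        rw [show (e α).1 = α 0 from rfl, show (e α).2 = fun i => α i.succ from rfl, hcomp α]
      rw [h3] at h2
      exact h2

/-- the Taylor coefficients at `t₀` of the Hermite expansion about
`s_B` recombine into direct Hermite evaluations at the sources. -/
theorem taylor_coefficients_recombine {d m : ℕ}
    (s : Fin m → Fin d → ℝ) (q : Fin m → ℝ) (sB t₀ : Fin d → ℝ)
    (δ : ℝ) (hδ : 0 < δ)
    (A : (Fin d → ℕ) → ℝ)
    (hA : ∀ α, A α = (1 / ∏ i, (Nat.factorial (α i) : ℝ)) *
      ∑ j, q j * ∏ i, ((s j i - sB i) / Real.sqrt δ) ^ (α i))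
    (β : Fin d → ℕ)
    (habs : Summable (fun α : Fin d → ℕ =>
      |(-1 : ℝ) ^ (∑ i, α i) * A α *
        hermiteFunMulti (fun i => α i + β i)
          (fun i => (sB i - t₀ i) / Real.sqrt δ)|)) :
    ((-1 : ℝ) ^ (∑ i, β i) / ∏ i, (Nat.factorial (β i) : ℝ)) *
        ∑' α : Fin d → ℕ,
          (-1 : ℝ) ^ (∑ i, α i) * A α *
            hermiteFunMulti (fun i => α i + β i)
              (fun i => (sB i - t₀ i) / Real.sqrt δ) =
      ((-1 : ℝ) ^ (∑ i, β i) / ∏ i, (Nat.factorial (β i) : ℝ)) *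
        ∑ j, q j * hermiteFunMulti β (fun i => (s j i - t₀ i) / Real.sqrt δ) := by
  congr 1
  have key := fun (j : Fin m) => pi_hasSum
    (g := fun (i : Fin d) (n : ℕ) => (-1 : ℝ) ^ n * ((s j i - sB i) / Real.sqrt δ) ^ n /
        (Nat.factorial n) * hermiteFun (n + β i) ((sB i - t₀ i) / Real.sqrt δ))
    (S := fun i => hermiteFun (β i)
        ((sB i - t₀ i) / Real.sqrt δ + (s j i - sB i) / Real.sqrt δ))
    (fun i => hermite_hasSum (β i) _ _) (fun i => hermite_summable_abs (β i) _ _)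
  have hSval : ∀ (j : Fin m) (i : Fin d),
      (sB i - t₀ i) / Real.sqrt δ + (s j i - sB i) / Real.sqrt δ
        = (s j i - t₀ i) / Real.sqrt δ := by
    intro j i
    rw [← add_div]
    ring_nf
  have hterm : ∀ α : Fin d → ℕ,
      (-1 : ℝ) ^ (∑ i, α i) * A α * hermiteFunMulti (fun i => α i + β i)
          (fun i => (sB i - t₀ i) / Real.sqrt δ)
      = ∑ j, q j * ∏ i : Fin d,
          ((-1 : ℝ) ^ (α i) * ((s j i - sB i) / Real.sqrt δ) ^ (α i) /
            (Nat.factorial (α i)) * hermiteFun (α i + β i) ((sB i - t₀ i) / Real.sqrt δ)) := by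
    intro α
    rw [hA α]
    simp only [hermiteFunMulti]
    rw [Finset.mul_sum, Finset.mul_sum, Finset.sum_mul]
    refine Finset.sum_congr rfl fun j _ => ?_
    rw [Finset.prod_mul_distrib, Finset.prod_div_distrib, Finset.prod_mul_distrib,
      Finset.prod_pow_eq_pow_sum]
    ring
  have hsummable : ∀ j : Fin m, Summable (fun α : Fin d → ℕ => ∏ i : Fin d,
      ((-1 : ℝ) ^ (α i) * ((s j i - sB i) / Real.sqrt δ) ^ (α i) /
        (Nat.factorial (α i)) * hermiteFun (α i + β i) ((sB i - t₀ i) / Real.sqrt δ))) :=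
    fun j => summable_abs_iff.mp (key j).2
  rw [tsum_congr hterm, Summable.tsum_finsetSum (fun j _ => (hsummable j).mul_left (q j))]
  refine Finset.sum_congr rfl fun j _ => ?_
  rw [tsum_mul_left]
  congr 1
  rw [(key j).1.tsum_eq]
  simp only [hermiteFunMulti]
  exact Finset.prod_congr rfl fun i _ => by rw [hSval j i]
end

section
/- Let 0 < r ≤ 1/2, p ≥ 1 an integer, K > 0, Q ≥ 0, and suppose coefficients B_β (β ∈ ℕ^d) satisfy |B_β| ≤ K·Q·2^{‖β‖_1/2}/√(β!). Then for any u ∈ ℝ^d with ‖u‖_∞ ≤ r/√2, the tail over multi-indices β with some coordinate ≥ p satisfies |∑_{β≥p} B_β u^β| ≤ (K·Q/(1−r)^d) ∑_{k=0}^{d−1} C(d,k)(1−r^p)^k (r^p/√(p!))^{d−k}. -/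
open Finset

lemma tsum_pi_prod {g : ℕ → ℝ} (hg0 : ∀ n, 0 ≤ g n) (hg : Summable g) (d : ℕ) :
    Summable (fun β : Fin d → ℕ => ∏ i, g (β i)) ∧
      (∑' β : Fin d → ℕ, ∏ i, g (β i)) = (∑' n, g n) ^ d := by
  induction d with
  | zero =>
    constructor
    · exact .of_finite
    · rw [tsum_eq_single (fun i => i.elim0) (fun b hb => absurd (Subsingleton.elim _ _) hb)]
      simp
  | succ n ih =>
    have hcomp : ∀ q : ℕ × (Fin n → ℕ),
        (∏ i, g (Fin.consEquiv (fun _ => ℕ) q i)) = g q.1 * ∏ i, g (q.2 i) := by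
      intro q
      simp [Fin.consEquiv, Fin.prod_univ_succ]
    have hmul : Summable (fun q : ℕ × (Fin n → ℕ) => g q.1 * ∏ i, g (q.2 i)) :=
      Summable.mul_of_nonneg (f := g) (g := fun β : Fin n → ℕ => ∏ i, g (β i)) hg ih.1
        (fun m => hg0 m) (fun β => Finset.prod_nonneg (fun i _ => hg0 (β i)))
    have hsum : Summable (fun β : Fin (n+1) → ℕ => ∏ i, g (β i)) := by
      rw [← (Fin.consEquiv (fun _ => ℕ)).summable_iff]
      exact hmul.congr fun q => (hcomp q).symm
    refine ⟨hsum, ?_⟩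
    have h1 : (∑' β : Fin (n+1) → ℕ, ∏ i, g (β i))
        = ∑' q : ℕ × (Fin n → ℕ), g q.1 * ∏ i, g (q.2 i) := by
      rw [← (Fin.consEquiv (fun _ => ℕ)).tsum_eq]
      exact tsum_congr hcomp
    have habs : Summable (fun m => ‖g m‖) :=
      hg.congr fun m => (Real.norm_of_nonneg (hg0 m)).symm
    have habs2 : Summable (fun β : Fin n → ℕ => ‖∏ i, g (β i)‖) :=
      ih.1.congr fun β =>
        (Real.norm_of_nonneg (Finset.prod_nonneg fun i _ => hg0 (β i))).symm
    rw [h1, ← tsum_mul_tsum_of_summable_norm (f := g)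
      (g := fun β : Fin n → ℕ => ∏ i, g (β i)) habs habs2, ih.2, pow_succ]
    ring

/-- truncated Taylor expansion tail bound. If the Taylor coefficients
satisfy `|B_β| ≤ K·Q·2^{‖β‖₁/2}/√(β!)` and `‖u‖_∞ ≤ r/√2`, then the tail of the Taylor
series over multi-indices `β` having some coordinate `≥ p` is bounded as stated. -/
theorem truncated_taylor_tail_bound {d : ℕ}
    (r : ℝ) (hr0 : 0 < r) (hr : r ≤ 1 / 2) (p : ℕ) (hp : 1 ≤ p)
    (K Q : ℝ) (hK : 0 < K) (hQ : 0 ≤ Q)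
    (B : (Fin d → ℕ) → ℝ)
    (hB : ∀ β : Fin d → ℕ,
      |B β| ≤ K * Q * (2 : ℝ) ^ ((∑ i, (β i : ℝ)) / 2) /
        Real.sqrt (∏ i, (Nat.factorial (β i) : ℝ)))
    (u : Fin d → ℝ) (hu : ∀ i, |u i| ≤ r / Real.sqrt 2) :
    |∑' β : {β : Fin d → ℕ // ∃ i, p ≤ β i}, B β.1 * ∏ i, u i ^ (β.1 i)| ≤
      (K * Q / (1 - r) ^ d) *
        ∑ k ∈ range d, (Nat.choose d k : ℝ) * (1 - r ^ p) ^ k *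
          (r ^ p / Real.sqrt (Nat.factorial p : ℝ)) ^ (d - k) := by
  classical
  have hr1 : r < 1 := lt_of_le_of_lt hr (by norm_num)
  have h1r : 0 < 1 - r := by linarith
  set g : ℕ → ℝ := fun n => r ^ n / Real.sqrt (Nat.factorial n) with hgdef
  have hfac1 : ∀ n : ℕ, (1 : ℝ) ≤ Real.sqrt (Nat.factorial n) := by
    intro n
    rw [show (1 : ℝ) = Real.sqrt 1 by simp]
    exact Real.sqrt_le_sqrt (by exact_mod_cast Nat.one_le_iff_ne_zero.mpr n.factorial_ne_zero)
  have hfacpos : ∀ n : ℕ, (0 : ℝ) < Real.sqrt (Nat.factorial n) :=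
    fun n => lt_of_lt_of_le one_pos (hfac1 n)
  have hg0 : ∀ n, 0 ≤ g n := fun n => div_nonneg (pow_nonneg hr0.le n) (Real.sqrt_nonneg _)
  have hgle : ∀ n, g n ≤ r ^ n := by
    intro n
    rw [hgdef]
    have h1 : r ^ n / Real.sqrt (Nat.factorial n) ≤ r ^ n / 1 := by
      gcongr
      exact hfac1 n
    simpa using h1
  have hgeo : Summable (fun n : ℕ => r ^ n) := summable_geometric_of_lt_one hr0.le hr1
  have hgsum : Summable g := hgeo.of_nonneg_of_le hg0 hgle
  set F : (Fin d → ℕ) → ℝ := fun β => ∏ i, g (β i) with hFdef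
  have hFsum : Summable F := (tsum_pi_prod hg0 hgsum d).1
  have hF0 : ∀ β, 0 ≤ F β := fun β => Finset.prod_nonneg fun i _ => hg0 _
  set S : ℝ := ∑' n, g n with hSdef
  set H : ℝ := ∑ n ∈ range p, g n with hHdef
  set T : ℝ := ∑' n, g (n + p) with hTdef
  have hKQ : 0 ≤ K * Q := mul_nonneg hK.le hQ
  -- pointwise bound
  have hpt : ∀ β : Fin d → ℕ, |B β * ∏ i, u i ^ β i| ≤ K * Q * F β := by
    intro β
    have hupow0 : (0:ℝ) ≤ ∏ i, |u i| ^ β i :=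
      Finset.prod_nonneg fun i _ => pow_nonneg (abs_nonneg _) _
    have habs : |B β * ∏ i, u i ^ β i| = |B β| * ∏ i, |u i| ^ β i := by
      rw [abs_mul, Finset.abs_prod]
      simp [abs_pow]
    have hcast : (∑ i, ((β i : ℝ))) = ((∑ i, β i : ℕ) : ℝ) := by push_cast; ring
    have h2pow : (2 : ℝ) ^ (((∑ i, β i : ℕ) : ℝ) / 2) = ∏ i, Real.sqrt 2 ^ β i := by
      rw [Finset.prod_pow_eq_pow_sum]
      rw [Real.sqrt_eq_rpow, ← Real.rpow_natCast ((2:ℝ) ^ ((1:ℝ)/2)) (∑ i, β i),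
        ← Real.rpow_mul (by norm_num)]
      ring_nf
    have hsqp : Real.sqrt (∏ i, (Nat.factorial (β i) : ℝ))
        = ∏ i, Real.sqrt (Nat.factorial (β i)) := by
      rw [Real.sqrt_eq_rpow, ← Real.finset_prod_rpow _ _ (fun i _ => by positivity)]
      simp [Real.sqrt_eq_rpow]
    calc |B β * ∏ i, u i ^ β i| = |B β| * ∏ i, |u i| ^ β i := habs
      _ ≤ (K * Q * (2 : ℝ) ^ ((∑ i, (β i : ℝ)) / 2) /
            Real.sqrt (∏ i, (Nat.factorial (β i) : ℝ))) * ∏ i, |u i| ^ β i :=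
          mul_le_mul_of_nonneg_right (hB β) hupow0
      _ = K * Q * ∏ i, (Real.sqrt 2 * |u i|) ^ β i / Real.sqrt (Nat.factorial (β i)) := by
          rw [hcast, h2pow, hsqp]
          simp only [mul_pow, div_eq_mul_inv, Finset.prod_mul_distrib, ← Finset.prod_inv_distrib]
          ring
      _ ≤ K * Q * F β := by
          refine mul_le_mul_of_nonneg_left (Finset.prod_le_prod ?_ ?_) hKQ
          · intro i _
            positivity
          · intro i _
            have h2 : Real.sqrt 2 * |u i| ≤ r := by
              have h2pos : (0:ℝ) < Real.sqrt 2 := Real.sqrt_pos.mpr (by norm_num)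
              calc Real.sqrt 2 * |u i| ≤ Real.sqrt 2 * (r / Real.sqrt 2) :=
                mul_le_mul_of_nonneg_left (hu i) h2pos.le
              _ = r := by field_simp
            exact (div_le_div_iff_of_pos_right (hfacpos _)).mpr
              (pow_le_pow_left₀ (by positivity) h2 _)
  -- summability
  set s : Set (Fin d → ℕ) := {β | ∃ i, p ≤ β i} with hsdef
  have hFs : Summable (fun β : s => F β.1) := hFsum.subtype s
  have hnorm : Summable (fun β : s => |B β.1 * ∏ i, u i ^ β.1 i|) :=
    (hFs.mul_left (K * Q)).of_nonneg_of_le (fun β => abs_nonneg _) (fun β => hpt β.1)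
  have step1 : |∑' β : s, B β.1 * ∏ i, u i ^ β.1 i|
      ≤ ∑' β : s, |B β.1 * ∏ i, u i ^ β.1 i| := by
    have h := norm_tsum_le_tsum_norm (f := fun β : s => B β.1 * ∏ i, u i ^ β.1 i)
      (hnorm.congr fun β => (Real.norm_eq_abs _).symm)
    simpa only [Real.norm_eq_abs] using h
  have step2 : ∑' β : s, |B β.1 * ∏ i, u i ^ β.1 i| ≤ ∑' β : s, K * Q * F β.1 :=
    Summable.tsum_le_tsum (fun β => hpt β.1) hnorm (hFs.mul_left _)
  have step3 : ∑' β : s, K * Q * F β.1 = K * Q * ∑' β : s, F β.1 := tsum_mul_left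
  -- the tail sum of F
  have htot : ∑' β, F β = S ^ d := (tsum_pi_prod hg0 hgsum d).2
  have hsplit : (∑' β : s, F β.1) + ∑' β : ↥sᶜ, F β.1 = ∑' β, F β :=
    Summable.tsum_subtype_add_tsum_subtype_compl hFsum s
  have hcompl : (∑' β : ↥sᶜ, F β.1) = H ^ d := by
    rw [_root_.tsum_subtype]
    rw [tsum_eq_sum (s := Fintype.piFinset fun _ : Fin d => range p)
      (f := Set.indicator sᶜ F) ?_]
    · calc ∑ β ∈ Fintype.piFinset (fun _ : Fin d => range p), Set.indicator sᶜ F β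
          = ∑ β ∈ Fintype.piFinset (fun _ : Fin d => range p), F β := by
            refine Finset.sum_congr rfl fun β hβ => ?_
            apply Set.indicator_of_mem
            simp only [hsdef, Set.mem_compl_iff, Set.mem_setOf_eq, not_exists, not_le]
            intro i
            exact mem_range.mp ((Fintype.mem_piFinset.mp hβ) i)
        _ = ∏ i : Fin d, ∑ n ∈ range p, g n := (Finset.prod_univ_sum _ _).symm
        _ = H ^ d := by rw [Finset.prod_const, card_univ, Fintype.card_fin]
    · intro β hβ
      apply Set.indicator_of_notMem
      simp only [Set.notMem_compl_iff, hsdef, Set.mem_setOf_eq]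
      rw [Fintype.mem_piFinset] at hβ
      push_neg at hβ
      obtain ⟨i, hi⟩ := hβ
      exact ⟨i, le_of_not_gt (by simpa [Finset.mem_range] using hi)⟩
  have hSHT : S = H + T := (Summable.sum_add_tsum_nat_add p hgsum).symm
  have htail : (∑' β : s, F β.1) = S ^ d - H ^ d := by
    rw [← htot, ← hsplit, hcompl]; ring
  -- bounds on H and T
  have hH0 : 0 ≤ H := Finset.sum_nonneg fun n _ => hg0 n
  have hT0 : 0 ≤ T := tsum_nonneg fun n => hg0 _
  have hHb : H ≤ (1 - r ^ p) / (1 - r) := by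
    have h1 : H ≤ ∑ n ∈ range p, r ^ n := Finset.sum_le_sum fun n _ => hgle n
    have h2 : (∑ n ∈ range p, r ^ n) = (1 - r ^ p) / (1 - r) := by
      rw [geom_sum_eq hr1.ne, div_eq_div_iff (by linarith) (by linarith)]
      ring
    linarith
  have hTsummable : Summable fun n => g (n + p) := (summable_nat_add_iff p).mpr hgsum
  have hTb : T ≤ r ^ p / Real.sqrt (Nat.factorial p) * (1 - r)⁻¹ := by
    have hptw : ∀ n, g (n + p) ≤ r ^ p / Real.sqrt (Nat.factorial p) * r ^ n := by
      intro n
      have hfle : Real.sqrt (Nat.factorial p) ≤ Real.sqrt (Nat.factorial (n + p)) :=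
        Real.sqrt_le_sqrt (by exact_mod_cast Nat.factorial_le (Nat.le_add_left p n))
      have h1 : r ^ (n + p) / Real.sqrt (Nat.factorial (n + p))
          ≤ r ^ (n + p) / Real.sqrt (Nat.factorial p) := by
        gcongr
      calc g (n + p) ≤ r ^ (n + p) / Real.sqrt (Nat.factorial p) := h1
        _ = r ^ p / Real.sqrt (Nat.factorial p) * r ^ n := by rw [pow_add]; ring
    have h2 := Summable.tsum_le_tsum hptw hTsummable (hgeo.mul_left _)
    rwa [tsum_mul_left, tsum_geometric_of_lt_one hr0.le hr1] at h2
  -- binomial expansion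
  have hbinom : S ^ d = (∑ k ∈ range d, H ^ k * T ^ (d - k) * (d.choose k : ℝ)) + H ^ d := by
    rw [hSHT, add_pow, Finset.sum_range_succ]
    simp
  have hterm : ∑ k ∈ range d, H ^ k * T ^ (d - k) * (d.choose k : ℝ)
      ≤ ∑ k ∈ range d, ((1 - r ^ p) / (1 - r)) ^ k *
          (r ^ p / Real.sqrt (Nat.factorial p) * (1 - r)⁻¹) ^ (d - k) * (d.choose k : ℝ) := by
    have hHb0 : (0:ℝ) ≤ (1 - r ^ p) / (1 - r) :=
      div_nonneg (by nlinarith [pow_le_one₀ hr0.le hr1.le (n := p)]) h1r.le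
    refine Finset.sum_le_sum fun k hk => ?_
    refine mul_le_mul_of_nonneg_right ?_ (Nat.cast_nonneg _)
    exact mul_le_mul (pow_le_pow_left₀ hH0 hHb k) (pow_le_pow_left₀ hT0 hTb _)
      (pow_nonneg hT0 _) (pow_nonneg hHb0 _)
  have hsum_eq : ∑ k ∈ range d, ((1 - r ^ p) / (1 - r)) ^ k *
        (r ^ p / Real.sqrt (Nat.factorial p) * (1 - r)⁻¹) ^ (d - k) * (d.choose k : ℝ)
      = (1 - r)⁻¹ ^ d * ∑ k ∈ range d, (d.choose k : ℝ) * (1 - r ^ p) ^ k *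
          (r ^ p / Real.sqrt (Nat.factorial p : ℝ)) ^ (d - k) := by
    rw [Finset.mul_sum]
    refine Finset.sum_congr rfl fun k hk => ?_
    have hkd : k ≤ d := (Finset.mem_range.mp hk).le
    have hsplitpow : (1 - r : ℝ)⁻¹ ^ d = (1 - r)⁻¹ ^ k * (1 - r)⁻¹ ^ (d - k) := by
      rw [← pow_add, Nat.add_sub_cancel' hkd]
    rw [hsplitpow]
    simp only [div_eq_mul_inv, mul_pow, inv_pow]
    ring
  have hfin : K * Q / (1 - r) ^ d = K * Q * (1 - r)⁻¹ ^ d := by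
    rw [inv_pow, div_eq_mul_inv]
  calc |∑' β : s, B β.1 * ∏ i, u i ^ β.1 i|
      ≤ ∑' β : s, K * Q * F β.1 := step1.trans step2
    _ = K * Q * (S ^ d - H ^ d) := by rw [step3, htail]
    _ = K * Q * ∑ k ∈ range d, H ^ k * T ^ (d - k) * (d.choose k : ℝ) := by
        rw [hbinom]; ring
    _ ≤ K * Q * ∑ k ∈ range d, ((1 - r ^ p) / (1 - r)) ^ k *
          (r ^ p / Real.sqrt (Nat.factorial p) * (1 - r)⁻¹) ^ (d - k) * (d.choose k : ℝ) :=
        mul_le_mul_of_nonneg_left hterm hKQ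
    _ = (K * Q / (1 - r) ^ d) * ∑ k ∈ range d, (d.choose k : ℝ) * (1 - r ^ p) ^ k *
          (r ^ p / Real.sqrt (Nat.factorial p : ℝ)) ^ (d - k) := by
        rw [hsum_eq, hfin]; ring
end
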